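/- The shifted Heller constant in dimension 2 equals 6: (a) there exist a vector t ∈ [0,1)^2 \ {0} and a matrix A ∈ {-1,0,1}^{2×6} with pairwise distinct columns such that t+A is totally 1-submodular; and (b) for every t ∈ [0,1)^2 \ {0} and every A ∈ {-1,0,1}^{2×n} with pairwise distinct columns such that t+A is totally 1-submodular, one has n ≤ 6. -/

import Mathlib

open Matrix

/-- Every `k×k` minor of `A` is at most `c` in absolute value. -/
def MinorsLE {m n : ℕ} (k : ℕ) (A : Matrix (Fin m) (Fin n) ℝ) (c : ℝ) : Prop :=
  ∀ (f : Fin k ↪ Fin m) (g : Fin k ↪ Fin n), |(A.submatrix f g).det| ≤ c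

/-- `A` is totally 1-submodular: all its minors, of any size, are at most `1`
in absolute value. -/
def Totally1Submodular {m n : ℕ} (A : Matrix (Fin m) (Fin n) ℝ) : Prop :=
  ∀ k : ℕ, MinorsLE k A 1

/-- The shifted matrix `t + A`, whose columns are `t + A_j`. -/
def shiftMat {m n : ℕ} (t : Fin m → ℝ) (A : Matrix (Fin m) (Fin n) ℝ) :
    Matrix (Fin m) (Fin n) ℝ :=
  Matrix.of fun i j => t i + A i j

/-- All entries of `A` lie in `{-1, 0, 1}`. -/
def SignEntries {m n : ℕ} (A : Matrix (Fin m) (Fin n) ℝ) : Prop :=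
  ∀ i j, A i j = -1 ∨ A i j = 0 ∨ A i j = 1

/-- The data admissible for the shifted Heller constant `h_s(m)`: a translation vector
`t ∈ [0,1)^m \ {0}` and a matrix `A ∈ {-1,0,1}^{m×n}` with pairwise distinct columns
such that `t + A` is totally 1-submodular. -/
def ShiftedAdmissible (m n : ℕ) (t : Fin m → ℝ) (A : Matrix (Fin m) (Fin n) ℝ) : Prop :=
  (∀ i, 0 ≤ t i ∧ t i < 1) ∧ t ≠ 0 ∧ SignEntries A ∧
    Function.Injective A.transpose ∧ Totally1Submodular (shiftMat t A)

/-- Bilinear bound used for `2×2` minors. -/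
lemma hellerKey (x1 x2 y1 y2 : ℝ) (h1 : |x1| ≤ 1/2) (h2 : |x2| ≤ 1/2) (h3 : |y1| ≤ 1)
    (h4 : |y2| ≤ 1) : |x1*y2 - x2*y1| ≤ 1 := by
  have t1 : |x1*y2| ≤ 1/2 := by
    rw [abs_mul]
    calc |x1| * |y2| ≤ (1/2) * 1 := mul_le_mul h1 h4 (abs_nonneg _) (by norm_num)
      _ = 1/2 := by norm_num
  have t2 : |x2*y1| ≤ 1/2 := by
    rw [abs_mul]
    calc |x2| * |y1| ≤ (1/2) * 1 := mul_le_mul h2 h3 (abs_nonneg _) (by norm_num)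
      _ = 1/2 := by norm_num
  calc |x1*y2 - x2*y1| ≤ |x1*y2| + |x2*y1| := abs_sub _ _
    _ ≤ 1 := by linarith

lemma hellerFin2cases : ∀ a b : Fin 2, a ≠ b → (a = 0 ∧ b = 1) ∨ (a = 1 ∧ b = 0) := by
  decide

/-- A `2×n` matrix whose row 0 is bounded by `1/2` and whose row 1 is bounded by `1`
is totally 1-submodular. -/
lemma hellerGenT1S {n : ℕ} (M : Matrix (Fin 2) (Fin n) ℝ)
    (h0 : ∀ j, |M 0 j| ≤ 1/2) (h1 : ∀ j, |M 1 j| ≤ 1) :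
    Totally1Submodular M := by
  have hall : ∀ i j, |M i j| ≤ 1 := by
    intro i j
    rcases (by decide : ∀ a : Fin 2, a = 0 ∨ a = 1) i with h | h <;> subst h
    · linarith [h0 j]
    · exact h1 j
  intro k
  match k with
  | 0 =>
    intro f g
    simp [Matrix.det_fin_zero]
  | 1 =>
    intro f g
    rw [Matrix.det_fin_one]
    exact hall _ _
  | 2 =>
    intro f g
    rw [Matrix.det_fin_two]
    simp only [Matrix.submatrix_apply]
    rcases hellerFin2cases (f 0) (f 1) (f.injective.ne (by decide)) with ⟨e0, e1⟩ | ⟨e0, e1⟩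
    · rw [e0, e1]
      exact hellerKey _ _ _ _ (h0 _) (h0 _) (h1 _) (h1 _)
    · rw [e0, e1]
      have := hellerKey (M 0 (g 1)) (M 0 (g 0)) (M 1 (g 1)) (M 1 (g 0))
        (h0 _) (h0 _) (h1 _) (h1 _)
      calc |M 1 (g 0) * M 0 (g 1) - M 1 (g 1) * M 0 (g 0)|
          = |M 0 (g 1) * M 1 (g 0) - M 0 (g 0) * M 1 (g 1)| := by ring_nf
        _ ≤ 1 := this
  | (k+3) =>
    intro f g
    exfalso
    have := Fintype.card_le_of_embedding f
    simp [Fintype.card_fin] at this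

/-- The upper bound: any admissible configuration in dimension 2 has at most 6 columns. -/
lemma hellerUpper (n : ℕ) (t : Fin 2 → ℝ) (A : Matrix (Fin 2) (Fin n) ℝ)
    (hadm : ShiftedAdmissible 2 n t A) : n ≤ 6 := by
  classical
  obtain ⟨h01, ht, hsign, hinj, hsub⟩ := hadm
  have hm : ∀ i j, |t i + A i j| ≤ 1 := by
    intro i j
    have := hsub 1 ⟨fun _ => i, fun a b _ => Subsingleton.elim a b⟩
      ⟨fun _ => j, fun a b _ => Subsingleton.elim a b⟩
    simp only [Matrix.det_fin_one, shiftMat, Matrix.submatrix_apply, Matrix.of_apply] at this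
    exact this
  obtain ⟨i0, hi0⟩ : ∃ i, t i ≠ 0 := by
    by_contra h; push_neg at h; exact ht (funext h)
  have hpos : 0 < t i0 := lt_of_le_of_ne (h01 i0).1 (Ne.symm hi0)
  have hA : ∀ j, A i0 j = -1 ∨ A i0 j = 0 := by
    intro j
    rcases hsign i0 j with h | h | h
    · exact Or.inl h
    · exact Or.inr h
    · exfalso
      have := hm i0 j
      rw [h, abs_le] at this
      linarith [this.2]
  set si : Fin 2 → Finset ℝ := fun i => if i = i0 then {-1, 0} else {-1, 0, 1} with hsi
  have c2 : ({-1, 0} : Finset ℝ).card = 2 := by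
    rw [Finset.card_insert_of_notMem (by norm_num), Finset.card_singleton]
  have c3 : ({-1, 0, 1} : Finset ℝ).card = 3 := by
    rw [Finset.card_insert_of_notMem (by norm_num),
      Finset.card_insert_of_notMem (by norm_num), Finset.card_singleton]
  have hcard : (Fintype.piFinset si).card = 6 := by
    rw [Fintype.card_piFinset, Fin.prod_univ_two]
    fin_cases i0 <;> simp [hsi, c2, c3]
  have hmem : ∀ j : Fin n, A.transpose j ∈ Fintype.piFinset si := by
    intro j
    rw [Fintype.mem_piFinset]
    intro i
    by_cases h : i = i0
    · subst h
      simp only [hsi, if_pos rfl, Finset.mem_insert, Finset.mem_singleton]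
      exact hA j
    · simp only [hsi, if_neg h, Finset.mem_insert, Finset.mem_singleton]
      exact hsign i j
  calc n = (Finset.univ : Finset (Fin n)).card := (Finset.card_fin n).symm
    _ ≤ (Fintype.piFinset si).card :=
        Finset.card_le_card_of_injOn _ (fun j _ => hmem j) (hinj.injOn)
    _ = 6 := hcard

/-- The shift vector of the extremal example. -/
noncomputable def hellerT : Fin 2 → ℝ := ![1/2, 0]

/-- Integer version of the extremal matrix. -/
def hellerB : Matrix (Fin 2) (Fin 6) ℤ := !![-1,-1,-1,0,0,0; -1,0,1,-1,0,1]

/-- The extremal matrix of the example. -/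
noncomputable def hellerA : Matrix (Fin 2) (Fin 6) ℝ :=
  Matrix.of fun i j => ((hellerB i j : ℤ) : ℝ)

lemma hellerLower : ShiftedAdmissible 2 6 hellerT hellerA := by
  refine ⟨?_, ?_, ?_, ?_, ?_⟩
  · intro i; fin_cases i <;> norm_num [hellerT]
  · intro h
    have := congrFun h 0
    norm_num [hellerT] at this
  · intro i j
    fin_cases i <;> fin_cases j <;> norm_num [hellerA, hellerB]
  · have hB : ∀ j1 j2 : Fin 6, (∀ i, hellerB i j1 = hellerB i j2) → j1 = j2 := by decide
    intro j1 j2 h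
    apply hB
    intro i
    have := congrFun h i
    simp only [Matrix.transpose_apply, hellerA, Matrix.of_apply] at this
    exact_mod_cast this
  · apply hellerGenT1S
    · intro j
      fin_cases j <;> norm_num [shiftMat, hellerT, hellerA, hellerB, abs_le]
    · intro j
      fin_cases j <;> norm_num [shiftMat, hellerT, hellerA, hellerB, abs_le]

theorem stmt7 :
    (∃ (t : Fin 2 → ℝ) (A : Matrix (Fin 2) (Fin 6) ℝ), ShiftedAdmissible 2 6 t A) ∧
    (∀ (n : ℕ) (t : Fin 2 → ℝ) (A : Matrix (Fin 2) (Fin n) ℝ),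
      ShiftedAdmissible 2 n t A → n ≤ 6) := by
  exact ⟨⟨hellerT, hellerA, hellerLower⟩, hellerUpper⟩
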